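/- Let v = v⁺ + v⁻ with v⁺(x,t) = p₁(x+t), v⁻(x,t) = p₂(x−t) (p₁, p₂ π-periodic, p₁ of mean zero), and let q be the truncation q(s) = s − M sgn(s) for |s| ≥ M and q(s) = 0 for |s| ≤ M (M ≥ 0). Set φ = q(v⁺) + q(v⁻). Then ∫_Q v_t φ_t dx dt = ∫_Q [q'(v⁺)(v⁺_t)² + q'(v⁻)(v⁻_t)²] dx dt ≥ 0, assuming p₁, p₂ ∈ H¹. -/

import Mathlib

open scoped Real
open MeasureTheory Set

-- helper: integrability on the box
lemma intQ18 {f : ℝ × ℝ → ℝ} (hm : Measurable f) (C : ℝ) (hb : ∀ z, |f z| ≤ C) :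
    IntegrableOn f (Set.Icc (0 : ℝ) π ×ˢ Set.Icc (0 : ℝ) (2 * π)) := by
  apply Measure.integrableOn_of_bounded (M := C)
  · exact ((isCompact_Icc.prod isCompact_Icc).measure_lt_top).ne
  · exact hm.aestronglyMeasurable
  · exact Filter.Eventually.of_forall fun z => by simpa using hb z

lemma intI18 {f : ℝ → ℝ} (hm : Measurable f) (C : ℝ) (hb : ∀ y, |f y| ≤ C) (a b : ℝ) :
    IntervalIntegrable f volume a b := by
  rw [intervalIntegrable_iff]
  apply Measure.integrableOn_of_bounded (M := C)
  · exact measure_Ioc_lt_top.ne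
  · exact hm.aestronglyMeasurable
  · exact Filter.Eventually.of_forall fun y => by simpa using hb y

lemma bdd18 {f : ℝ → ℝ} (hf : Continuous f) (hp : Function.Periodic f π) :
    ∃ C, ∀ y, |f y| ≤ C := by
  obtain ⟨C, hC⟩ := isCompact_Icc.exists_bound_of_continuousOn
    (s := Set.Icc (0 : ℝ) π) hf.continuousOn
  refine ⟨C, fun y => ?_⟩
  obtain ⟨z, hz, hyz⟩ := hp.exists_mem_Ico₀ Real.pi_pos y
  rw [hyz]
  simpa using hC z (Set.Ico_subset_Icc_self hz)

/-- key lemma: the cross integral factorizes. -/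
lemma cross18 (F G : ℝ → ℝ) (hF : Measurable F) (hG : Measurable G)
    (CF CG : ℝ) (hCF : 0 ≤ CF) (hCG : 0 ≤ CG)
    (hFb : ∀ y, |F y| ≤ CF) (hGb : ∀ y, |G y| ≤ CG)
    (hFp : Function.Periodic F π) (hGp : Function.Periodic G π) :
    (∫ z in Set.Icc (0 : ℝ) π ×ˢ Set.Icc (0 : ℝ) (2 * π),
        F (z.1 + z.2) * G (z.1 - z.2)) =
      2 * (∫ y in (0 : ℝ)..π, F y) * (∫ y in (0 : ℝ)..π, G y) := by
  have hF2 : Function.Periodic F (2 * π) := by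
    simpa [two_mul] using hFp.add_period hFp
  have hG2 : Function.Periodic G (2 * π) := by
    simpa [two_mul] using hGp.add_period hGp
  have hbound : ∀ (u v : ℝ), |F u * G v| ≤ CF * CG := fun u v => by
    rw [abs_mul]
    exact mul_le_mul (hFb u) (hGb v) (abs_nonneg _) hCF
  -- step 1: Fubini
  have hmeas : Measurable fun z : ℝ × ℝ => F (z.1 + z.2) * G (z.1 - z.2) :=
    (hF.comp (measurable_fst.add measurable_snd)).mul
      (hG.comp (measurable_fst.sub measurable_snd))
  have hint := intQ18 hmeas (CF * CG) (fun z => hbound _ _)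
  rw [Measure.volume_eq_prod ℝ ℝ] at hint ⊢
  rw [setIntegral_prod _ hint]
  -- step 2: inner integral
  have hinner : ∀ x : ℝ, (∫ t in Set.Icc (0 : ℝ) (2 * π), F (x + t) * G (x - t))
      = ∫ s in Set.Icc (0 : ℝ) (2 * π), F s * G (2 * x - s) := by
    intro x
    have h1 : (∫ t in Set.Icc (0 : ℝ) (2 * π), F (x + t) * G (x - t))
        = ∫ t in (0 : ℝ)..(2 * π), F (x + t) * G (x - t) := by
      rw [integral_Icc_eq_integral_Ioc,
        intervalIntegral.integral_of_le (by positivity : (0:ℝ) ≤ 2 * π)]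
    have h2 : (∫ t in (0 : ℝ)..(2 * π), F (x + t) * G (x - t))
        = ∫ t in (0 : ℝ)..(2 * π), (fun s => F s * G (2 * x - s)) (x + t) := by
      congr 1
      funext t
      simp only []
      ring_nf
    have hH : Function.Periodic (fun s => F s * G (2 * x - s)) (2 * π) := by
      intro s
      simp only []
      rw [hF2 s]
      congr 1
      have := hG2 (2 * x - s - 2 * π)
      simp only [sub_add_cancel] at this
      rw [show 2 * x - (s + 2 * π) = 2 * x - s - 2 * π by ring, this]
    have h3 : (∫ t in (0 : ℝ)..(2 * π), (fun s => F s * G (2 * x - s)) (x + t))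
        = ∫ s in (x + 0)..(x + 2 * π), F s * G (2 * x - s) :=
      intervalIntegral.integral_comp_add_left (fun s => F s * G (2 * x - s)) x
    have h4 : (∫ s in x..(x + 2 * π), (fun s => F s * G (2 * x - s)) s)
        = ∫ s in (0 : ℝ)..(0 + 2 * π), (fun s => F s * G (2 * x - s)) s :=
      hH.intervalIntegral_add_eq x 0
    rw [h1, h2, h3]
    rw [add_zero] at h3 ⊢
    rw [h4, zero_add, intervalIntegral.integral_of_le (by positivity : (0:ℝ) ≤ 2 * π),
      ← integral_Icc_eq_integral_Ioc]
  simp only [hinner]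
  -- step 3: swap
  have hint2 : Integrable (Function.uncurry fun x s => F s * G (2 * x - s))
      ((volume.restrict (Set.Icc (0:ℝ) π)).prod (volume.restrict (Set.Icc (0:ℝ) (2 * π)))) := by
    rw [Measure.prod_restrict, ← Measure.volume_eq_prod]
    apply intQ18 (f := fun z : ℝ × ℝ => F z.2 * G (2 * z.1 - z.2))
    · exact (hF.comp measurable_snd).mul
        (hG.comp ((measurable_const.mul measurable_fst).sub measurable_snd))
    · exact fun z => hbound _ _
  rw [integral_integral_swap hint2]
  -- step 4: inner x-integral is constant
  have hGint : ∀ s : ℝ, (∫ x in Set.Icc (0 : ℝ) π, G (2 * x - s)) = ∫ y in (0:ℝ)..π, G y := by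
    intro s
    rw [integral_Icc_eq_integral_Ioc,
      ← intervalIntegral.integral_of_le Real.pi_pos.le]
    have h5 : (∫ x in (0:ℝ)..π, G (2 * x - s)) = ∫ x in (0:ℝ)..π, G (2 * x + (-s)) := by
      simp only [sub_eq_add_neg]
    rw [h5, intervalIntegral.integral_comp_mul_add G (two_ne_zero) (-s)]
    have h6 : (∫ w in (2 * 0 + -s)..(2 * π + -s), G w) = ∫ w in (-s)..(-s + 2 * π), G w := by
      rw [show 2 * 0 + -s = -s by ring, show 2 * π + -s = -s + 2 * π by ring]
    rw [h6, hG2.intervalIntegral_add_eq (-s) 0, zero_add]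
    have h7 : (∫ w in (0:ℝ)..2 * π, G w)
        = (∫ w in (0:ℝ)..π, G w) + ∫ w in π..(2 * π), G w := by
      rw [intervalIntegral.integral_add_adjacent_intervals
        (intI18 hG CG hGb 0 π) (intI18 hG CG hGb π (2 * π))]
    have h8 : (∫ w in π..(2 * π), G w) = ∫ w in (0:ℝ)..π, G w := by
      have := hGp.intervalIntegral_add_eq π 0
      rw [zero_add] at this
      rw [show (2:ℝ) * π = π + π by ring, this]
    rw [h7, h8]
    rw [smul_eq_mul]
    ring
  have hsimp : ∀ s : ℝ, (∫ x in Set.Icc (0:ℝ) π, F s * G (2 * x - s))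
      = F s * ∫ y in (0:ℝ)..π, G y := fun s => by
    rw [MeasureTheory.integral_const_mul, hGint s]
  simp only [hsimp]
  rw [MeasureTheory.integral_mul_const]
  have h9 : (∫ s in Set.Icc (0:ℝ) (2 * π), F s) = 2 * ∫ y in (0:ℝ)..π, F y := by
    rw [integral_Icc_eq_integral_Ioc,
      ← intervalIntegral.integral_of_le (by positivity : (0:ℝ) ≤ 2 * π)]
    have h7 : (∫ w in (0:ℝ)..2 * π, F w)
        = (∫ w in (0:ℝ)..π, F w) + ∫ w in π..(2 * π), F w := by
      rw [intervalIntegral.integral_add_adjacent_intervals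
        (intI18 hF CF hFb 0 π) (intI18 hF CF hFb π (2 * π))]
    have h8 : (∫ w in π..(2 * π), F w) = ∫ w in (0:ℝ)..π, F w := by
      have := hFp.intervalIntegral_add_eq π 0
      rw [zero_add] at this
      rw [show (2:ℝ) * π = π + π by ring, this]
    rw [h7, h8]; ring
  rw [h9]

theorem stmt18 (p1 p2 : ℝ → ℝ) (M : ℝ) (hM : 0 ≤ M)
    (hp1 : ContDiff ℝ 1 p1) (hp2 : ContDiff ℝ 1 p2)
    (hper1 : Function.Periodic p1 π) (hper2 : Function.Periodic p2 π)
    (hmean : (∫ y in Set.Icc (0 : ℝ) π, p1 y) = 0)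
    (q qd : ℝ → ℝ)
    (hq : ∀ y : ℝ, q y = if M ≤ y then y - M else if y ≤ -M then y + M else 0)
    (hqd : ∀ y : ℝ, qd y = if M < |y| then 1 else 0) :
    (∫ z in Set.Icc (0 : ℝ) π ×ˢ Set.Icc (0 : ℝ) (2 * π),
        (deriv p1 (z.1 + z.2) - deriv p2 (z.1 - z.2)) *
          (qd (p1 (z.1 + z.2)) * deriv p1 (z.1 + z.2) -
            qd (p2 (z.1 - z.2)) * deriv p2 (z.1 - z.2))) =
      (∫ z in Set.Icc (0 : ℝ) π ×ˢ Set.Icc (0 : ℝ) (2 * π),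
        (qd (p1 (z.1 + z.2)) * (deriv p1 (z.1 + z.2)) ^ 2 +
          qd (p2 (z.1 - z.2)) * (deriv p2 (z.1 - z.2)) ^ 2)) ∧
    0 ≤ ∫ z in Set.Icc (0 : ℝ) π ×ˢ Set.Icc (0 : ℝ) (2 * π),
        (qd (p1 (z.1 + z.2)) * (deriv p1 (z.1 + z.2)) ^ 2 +
          qd (p2 (z.1 - z.2)) * (deriv p2 (z.1 - z.2)) ^ 2) := by
  -- basic facts
  have hqd0 : ∀ y, 0 ≤ qd y := fun y => by rw [hqd]; split <;> norm_num
  have hqd1 : ∀ y, |qd y| ≤ 1 := fun y => by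
    rw [hqd]; split <;> simp
  have hqdm : Measurable qd := by
    have h : qd = fun y => if M < |y| then (1:ℝ) else 0 := funext hqd
    rw [h]
    exact Measurable.ite (measurableSet_lt measurable_const measurable_abs)
      measurable_const measurable_const
  have hd1c : Continuous (deriv p1) := hp1.continuous_deriv le_rfl
  have hd2c : Continuous (deriv p2) := hp2.continuous_deriv le_rfl
  have hdp1 : Function.Periodic (deriv p1) π := fun x => by
    have h : (fun y => p1 (y + π)) = p1 := funext hper1
    rw [← deriv_comp_add_const, h]
  have hdp2 : Function.Periodic (deriv p2) π := fun x => by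
    have h : (fun y => p2 (y + π)) = p2 := funext hper2
    rw [← deriv_comp_add_const, h]
  obtain ⟨C1, hC1⟩ := bdd18 hd1c hdp1
  obtain ⟨C2, hC2⟩ := bdd18 hd2c hdp2
  have hC1' : 0 ≤ C1 := le_trans (abs_nonneg _) (hC1 0)
  have hC2' : 0 ≤ C2 := le_trans (abs_nonneg _) (hC2 0)
  -- mean-zero of derivatives
  have hint1 : (∫ y in (0:ℝ)..π, deriv p1 y) = 0 := by
    rw [intervalIntegral.integral_deriv_eq_sub
      (fun x _ => (hp1.differentiable one_ne_zero).differentiableAt)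
      (hd1c.intervalIntegrable 0 π)]
    have := hper1 0
    rw [zero_add] at this
    rw [this, sub_self]
  have hint2 : (∫ y in (0:ℝ)..π, deriv p2 y) = 0 := by
    rw [intervalIntegral.integral_deriv_eq_sub
      (fun x _ => (hp2.differentiable one_ne_zero).differentiableAt)
      (hd2c.intervalIntegrable 0 π)]
    have := hper2 0
    rw [zero_add] at this
    rw [this, sub_self]
  -- the two cross terms vanish
  have hFb1 : ∀ y, |qd (p1 y) * deriv p1 y| ≤ C1 := fun y => by
    rw [abs_mul]
    calc |qd (p1 y)| * |deriv p1 y| ≤ 1 * C1 :=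
      mul_le_mul (hqd1 _) (hC1 _) (abs_nonneg _) one_pos.le
    _ = C1 := one_mul _
  have hFb2 : ∀ y, |qd (p2 y) * deriv p2 y| ≤ C2 := fun y => by
    rw [abs_mul]
    calc |qd (p2 y)| * |deriv p2 y| ≤ 1 * C2 :=
      mul_le_mul (hqd1 _) (hC2 _) (abs_nonneg _) one_pos.le
    _ = C2 := one_mul _
  have hFm1 : Measurable fun y => qd (p1 y) * deriv p1 y :=
    (hqdm.comp hp1.continuous.measurable).mul hd1c.measurable
  have hFm2 : Measurable fun y => qd (p2 y) * deriv p2 y :=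
    (hqdm.comp hp2.continuous.measurable).mul hd2c.measurable
  have hFp1 : Function.Periodic (fun y => qd (p1 y) * deriv p1 y) π := fun x => by
    simp only [hper1 x, hdp1 x]
  have hFp2 : Function.Periodic (fun y => qd (p2 y) * deriv p2 y) π := fun x => by
    simp only [hper2 x, hdp2 x]
  have hcross1 : (∫ z in Set.Icc (0 : ℝ) π ×ˢ Set.Icc (0 : ℝ) (2 * π),
      qd (p1 (z.1 + z.2)) * deriv p1 (z.1 + z.2) * deriv p2 (z.1 - z.2)) = 0 := by
    have := cross18 (fun y => qd (p1 y) * deriv p1 y) (deriv p2)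
      hFm1 hd2c.measurable C1 C2 hC1' hC2' hFb1 hC2 hFp1 hdp2
    simpa [hint2] using this
  have hcross2 : (∫ z in Set.Icc (0 : ℝ) π ×ˢ Set.Icc (0 : ℝ) (2 * π),
      deriv p1 (z.1 + z.2) * (qd (p2 (z.1 - z.2)) * deriv p2 (z.1 - z.2))) = 0 := by
    have := cross18 (deriv p1) (fun y => qd (p2 y) * deriv p2 y)
      hd1c.measurable hFm2 C1 C2 hC1' hC2' hC1 hFb2 hdp1 hFp2
    simpa [hint1] using this
  -- integrability of the pieces
  have addm : Measurable fun z : ℝ × ℝ => z.1 + z.2 := measurable_fst.add measurable_snd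
  have subm : Measurable fun z : ℝ × ℝ => z.1 - z.2 := measurable_fst.sub measurable_snd
  have htm : Measurable fun z : ℝ × ℝ =>
      qd (p1 (z.1 + z.2)) * (deriv p1 (z.1 + z.2)) ^ 2 +
        qd (p2 (z.1 - z.2)) * (deriv p2 (z.1 - z.2)) ^ 2 := by
    apply Measurable.add
    · exact ((hqdm.comp (hp1.continuous.measurable.comp addm)).mul
        ((hd1c.measurable.comp addm).pow_const 2))
    · exact ((hqdm.comp (hp2.continuous.measurable.comp subm)).mul
        ((hd2c.measurable.comp subm).pow_const 2))
  have habs : ∀ (u w C : ℝ), |w| ≤ C → |qd u * w ^ 2| ≤ C ^ 2 := by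
    intro u w C hw
    rw [abs_mul, abs_pow]
    calc |qd u| * |w| ^ 2 ≤ 1 * C ^ 2 := by
          apply mul_le_mul (hqd1 _) (pow_le_pow_left₀ (abs_nonneg _) hw 2)
            (by positivity) one_pos.le
      _ = C ^ 2 := one_mul _
  have htb : ∀ z : ℝ × ℝ, |qd (p1 (z.1 + z.2)) * (deriv p1 (z.1 + z.2)) ^ 2 +
      qd (p2 (z.1 - z.2)) * (deriv p2 (z.1 - z.2)) ^ 2| ≤ C1 ^ 2 + C2 ^ 2 := fun z =>
    le_trans (abs_add_le _ _) (add_le_add (habs _ _ _ (hC1 _)) (habs _ _ _ (hC2 _)))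
  have hti := intQ18 htm (C1 ^ 2 + C2 ^ 2) htb
  have hc1m : Measurable fun z : ℝ × ℝ =>
      qd (p1 (z.1 + z.2)) * deriv p1 (z.1 + z.2) * deriv p2 (z.1 - z.2) :=
    ((hqdm.comp (hp1.continuous.measurable.comp addm)).mul
      (hd1c.measurable.comp addm)).mul (hd2c.measurable.comp subm)
  have hc1b : ∀ z : ℝ × ℝ,
      |qd (p1 (z.1 + z.2)) * deriv p1 (z.1 + z.2) * deriv p2 (z.1 - z.2)| ≤ C1 * C2 :=
    fun z => by
      rw [abs_mul]
      exact mul_le_mul (hFb1 _) (hC2 _) (abs_nonneg _) hC1'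
  have hc1i := intQ18 hc1m (C1 * C2) hc1b
  have hc2m : Measurable fun z : ℝ × ℝ =>
      deriv p1 (z.1 + z.2) * (qd (p2 (z.1 - z.2)) * deriv p2 (z.1 - z.2)) :=
    (hd1c.measurable.comp addm).mul
      ((hqdm.comp (hp2.continuous.measurable.comp subm)).mul (hd2c.measurable.comp subm))
  have hc2b : ∀ z : ℝ × ℝ,
      |deriv p1 (z.1 + z.2) * (qd (p2 (z.1 - z.2)) * deriv p2 (z.1 - z.2))| ≤ C1 * C2 :=
    fun z => by
      rw [abs_mul]
      exact mul_le_mul (hC1 _) (hFb2 _) (abs_nonneg _) hC1'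
  have hc2i := intQ18 hc2m (C1 * C2) hc2b
  constructor
  · -- the equality
    have key : ∀ z : ℝ × ℝ,
        (deriv p1 (z.1 + z.2) - deriv p2 (z.1 - z.2)) *
          (qd (p1 (z.1 + z.2)) * deriv p1 (z.1 + z.2) -
            qd (p2 (z.1 - z.2)) * deriv p2 (z.1 - z.2)) =
        (qd (p1 (z.1 + z.2)) * (deriv p1 (z.1 + z.2)) ^ 2 +
          qd (p2 (z.1 - z.2)) * (deriv p2 (z.1 - z.2)) ^ 2) -
        qd (p1 (z.1 + z.2)) * deriv p1 (z.1 + z.2) * deriv p2 (z.1 - z.2) -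
        deriv p1 (z.1 + z.2) * (qd (p2 (z.1 - z.2)) * deriv p2 (z.1 - z.2)) :=
      fun z => by ring
    simp only [key]
    have hti' : IntegrableOn (fun z : ℝ × ℝ =>
        (qd (p1 (z.1 + z.2)) * (deriv p1 (z.1 + z.2)) ^ 2 +
          qd (p2 (z.1 - z.2)) * (deriv p2 (z.1 - z.2)) ^ 2) -
        qd (p1 (z.1 + z.2)) * deriv p1 (z.1 + z.2) * deriv p2 (z.1 - z.2))
        (Set.Icc (0 : ℝ) π ×ˢ Set.Icc (0 : ℝ) (2 * π)) := hti.sub hc1i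
    rw [integral_sub hti' hc2i, hcross2, integral_sub hti hc1i, hcross1]
    ring
  · -- nonnegativity
    apply setIntegral_nonneg (measurableSet_Icc.prod measurableSet_Icc)
    intro z hz
    exact add_nonneg (mul_nonneg (hqd0 _) (sq_nonneg _)) (mul_nonneg (hqd0 _) (sq_nonneg _))
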